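/- Let d ≥ 3 be an integer, c₁ > 0 a real constant, and define T : ℕ → ℝ by T(n) = c₁·Γ(d+n)/Γ(n+1) - (2/(d-2))·n - d/((d-1)(d-2)), where Γ is the real Gamma function. Then T(n)/n^{d-1} → c₁ as n → ∞; in particular T(n) = Θ(n^{d-1}). -/

import Mathlib

open Filter Asymptotics

lemma gamma_ratio (n m : ℕ) :
    Real.Gamma ((n:ℝ) + 1 + m) / Real.Gamma ((n:ℝ) + 1)
      = ∏ k ∈ Finset.range m, ((n:ℝ) + 1 + k) := by
  have hpos : 0 < Real.Gamma ((n:ℝ) + 1) := Real.Gamma_pos_of_pos (by positivity)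
  induction m with
  | zero => simp [div_self hpos.ne']
  | succ m ih =>
      have hx : ((n:ℝ) + 1 + m) ≠ 0 := by positivity
      have : Real.Gamma ((n:ℝ) + 1 + (m + 1 : ℕ))
          = ((n:ℝ) + 1 + m) * Real.Gamma ((n:ℝ) + 1 + m) := by
        rw [show ((n:ℝ) + 1 + (m + 1 : ℕ)) = ((n:ℝ) + 1 + m) + 1 by push_cast; ring,
          Real.Gamma_add_one hx]
      rw [this, Finset.prod_range_succ, ← ih, mul_div_assoc, mul_comm]

lemma ratio_tendsto (m : ℕ) :
    Tendsto (fun n : ℕ => (∏ k ∈ Finset.range m, ((n:ℝ) + 1 + k)) / (n:ℝ) ^ m)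
      atTop (nhds 1) := by
  have key : ∀ n : ℕ, (∏ k ∈ Finset.range m, ((n:ℝ) + 1 + k)) / (n:ℝ) ^ m
      = ∏ k ∈ Finset.range m, (((n:ℝ) + 1 + k) / n) := by
    intro n
    rw [Finset.prod_div_distrib, Finset.prod_const, Finset.card_range]
  simp only [key]
  have : Tendsto (fun n : ℕ => ∏ k ∈ Finset.range m, (((n:ℝ) + 1 + k) / n)) atTop
      (nhds (∏ k ∈ Finset.range m, (1:ℝ))) := by
    apply tendsto_finset_prod
    intro k _
    have h0 : Tendsto (fun n : ℕ => (1 + (k:ℝ)) / n) atTop (nhds 0) :=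
      tendsto_const_div_atTop_nhds_zero_nat _
    have : Tendsto (fun n : ℕ => 1 + (1 + (k:ℝ)) / n) atTop (nhds (1 + 0)) :=
      tendsto_const_nhds.add h0
    rw [add_zero] at this
    apply this.congr'
    filter_upwards [eventually_gt_atTop 0] with n hn
    have hn' : (n:ℝ) ≠ 0 := Nat.cast_ne_zero.mpr hn.ne'
    field_simp
    ring
  simpa using this

theorem stmt_10 (d : ℕ) (hd : 3 ≤ d) (c₁ : ℝ) (hc₁ : 0 < c₁) (T : ℕ → ℝ)
    (hT : ∀ n : ℕ, T n = c₁ * Real.Gamma ((d : ℝ) + n) / Real.Gamma ((n : ℝ) + 1)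
        - (2 / ((d : ℝ) - 2)) * n - (d : ℝ) / (((d : ℝ) - 1) * ((d : ℝ) - 2))) :
    Tendsto (fun n : ℕ => T n / (n : ℝ) ^ (d - 1)) atTop (nhds c₁) ∧
      (fun n : ℕ => T n) =Θ[atTop] (fun n : ℕ => (n : ℝ) ^ (d - 1)) := by
  set m := d - 1 with hm
  have hm2 : 2 ≤ m := by omega
  have hcastd : (d:ℝ) = (m:ℝ) + 1 := by
    have : d = m + 1 := by omega
    rw [this]; push_cast; ring
  -- main limit
  have hmain : Tendsto (fun n : ℕ => T n / (n : ℝ) ^ m) atTop (nhds c₁) := by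
    have h1 : Tendsto (fun n : ℕ =>
        c₁ * ((∏ k ∈ Finset.range m, ((n:ℝ) + 1 + k)) / (n:ℝ) ^ m)) atTop
        (nhds (c₁ * 1)) := tendsto_const_nhds.mul (ratio_tendsto m)
    have h2 : Tendsto (fun n : ℕ => (2 / ((d : ℝ) - 2)) * ((n:ℝ) / (n:ℝ) ^ m)) atTop
        (nhds ((2 / ((d : ℝ) - 2)) * 0)) := by
      apply tendsto_const_nhds.mul
      have hpow : Tendsto (fun n : ℕ => ((n:ℝ) ^ (m - 1))⁻¹) atTop (nhds 0) := by
        apply Tendsto.inv_tendsto_atTop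
        exact (tendsto_pow_atTop (by omega : m - 1 ≠ 0)).comp tendsto_natCast_atTop_atTop
      apply hpow.congr'
      filter_upwards [eventually_gt_atTop 0] with n hn
      have hn' : (n:ℝ) ≠ 0 := Nat.cast_ne_zero.mpr hn.ne'
      rw [show m = (m - 1) + 1 by omega, pow_succ]
      field_simp
      rw [Nat.add_sub_cancel]
    have h3 : Tendsto (fun n : ℕ =>
        ((d : ℝ) / (((d : ℝ) - 1) * ((d : ℝ) - 2))) / (n:ℝ) ^ m) atTop (nhds 0) := by
      apply Tendsto.div_atTop tendsto_const_nhds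
      exact (tendsto_pow_atTop (by omega : m ≠ 0)).comp tendsto_natCast_atTop_atTop
    have := (h1.sub h2).sub h3
    simp only [mul_one, mul_zero, sub_zero] at this
    apply this.congr
    intro n
    have hg : Real.Gamma ((d : ℝ) + n) / Real.Gamma ((n : ℝ) + 1)
        = ∏ k ∈ Finset.range m, ((n:ℝ) + 1 + k) := by
      rw [← gamma_ratio n m]
      congr 2
      rw [hcastd]; ring
    rw [hT n, sub_div, sub_div, mul_div_assoc, hg]
    ring
  constructor
  · exact hmain
  · have hne : ∀ᶠ n : ℕ in atTop, c₁ * (n:ℝ) ^ m ≠ 0 := by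
      filter_upwards [eventually_gt_atTop 0] with n hn
      positivity
    have hequiv : (fun n : ℕ => T n) ~[atTop] (fun n : ℕ => c₁ * (n:ℝ) ^ m) := by
      rw [Asymptotics.isEquivalent_iff_tendsto_one hne]
      have : Tendsto (fun n : ℕ => (T n / (n:ℝ) ^ m) / c₁) atTop (nhds (c₁ / c₁)) :=
        hmain.div tendsto_const_nhds hc₁.ne'
      rw [div_self hc₁.ne'] at this
      apply this.congr'
      filter_upwards [eventually_gt_atTop 0] with n hn
      simp only [Pi.div_apply]
      rw [div_div, mul_comm]
    calc (fun n : ℕ => T n) =Θ[atTop] (fun n : ℕ => c₁ * (n:ℝ) ^ m) := hequiv.isTheta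
      _ =Θ[atTop] (fun n : ℕ => (n:ℝ) ^ m) := (Asymptotics.isTheta_const_mul_left hc₁.ne').mpr Asymptotics.isTheta_rfl
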